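/- Let Λ⁺ be a positive semidefinite diagonal n×n real matrix, Λ⁻ a negative semidefinite diagonal m×m real matrix with |Λ⁻| = -Λ⁻, and R an m×n real matrix satisfying I - RᵀR ⪰ 0. If √|Λ⁻| w⁻ = R √Λ⁺ w⁺ (the homogeneous boundary condition), then (w⁺)ᵀ Λ⁺ w⁺ + (w⁻)ᵀ Λ⁻ w⁻ ≥ 0. -/

import Mathlib

open Matrix

/-- Strong homogeneous nonlinear boundary conditions: if `√|Λ⁻| w⁻ = R √Λ⁺ w⁺`
and `I - Rᵀ R ⪰ 0`, then the boundary term `(w⁺)ᵀ Λ⁺ w⁺ + (w⁻)ᵀ Λ⁻ w⁻` is nonnegative. -/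
theorem stmt1 (n m : ℕ) (lp : Fin n → ℝ) (lm : Fin m → ℝ)
    (hlp : ∀ i, 0 ≤ lp i) (hlm : ∀ i, lm i ≤ 0)
    (R : Matrix (Fin m) (Fin n) ℝ)
    (hR : ((1 : Matrix (Fin n) (Fin n) ℝ) - Rᵀ * R).PosSemidef)
    (wp : Fin n → ℝ) (wm : Fin m → ℝ)
    (hbc : (fun i => Real.sqrt (-(lm i)) * wm i)
        = R.mulVec (fun i => Real.sqrt (lp i) * wp i)) :
    0 ≤ ∑ i, lp i * (wp i) ^ 2 + ∑ i, lm i * (wm i) ^ 2 := by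
  set u : Fin n → ℝ := fun i => Real.sqrt (lp i) * wp i with hu
  have h1 : ∑ i, lp i * (wp i) ^ 2 = ∑ i, u i ^ 2 := by
    refine Finset.sum_congr rfl fun i _ => ?_
    simp [hu, mul_pow, Real.sq_sqrt (hlp i)]
  have h2 : ∑ i, lm i * (wm i) ^ 2 = -∑ i, (R.mulVec u i) ^ 2 := by
    rw [← Finset.sum_neg_distrib]
    refine Finset.sum_congr rfl fun i _ => ?_
    have : R.mulVec u i = Real.sqrt (-(lm i)) * wm i := by
      exact (congrFun hbc i).symm
    rw [this, mul_pow, Real.sq_sqrt (by linarith [hlm i])]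
    ring
  rw [h1, h2]
  have h := hR.dotProduct_mulVec_nonneg u
  have hd : (star u) ⬝ᵥ ((1 - Rᵀ * R).mulVec u)
      = ∑ i, u i ^ 2 - ∑ i, (R.mulVec u i) ^ 2 := by
    rw [sub_mulVec, dotProduct_sub, one_mulVec, ← mulVec_mulVec,
      dotProduct_mulVec, vecMul_transpose]
    simp [dotProduct, sq]
  rw [hd] at h
  exact_mod_cast by linarith [h]
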